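/- Suppose for each j ∈ J (J finite), cycle C_j has length L_j, X-indicator x_j, real assignment α_j with X-count bound Σ_j max_s ⟨C_j, α_j^{↺s}⟩^X ≤ R, and each x_j has p_j circularly-consecutive support segments. Let N_j be integers with Σ_j N_j = Σ_j ‖α_j‖₁ and |N_j − ‖α_j‖₁| ≤ 1, and let α̃_j be the pseudo-periodic integer assignment of weight N_j on C_j. Then Σ_j max_s ⟨C_j, α̃_j^{↺s}⟩^X ≤ R + |J| + Σ_j p_j. -/

import Mathlib

/-- The `X`-count at shift `s`: `⟨C, α^{↺s}⟩^X = Σ_{i < L} x i * α ((i - s) mod L)`. -/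
noncomputable def xcount (L : ℕ) (x α : ℕ → ℝ) (s : ℕ) : ℝ :=
  ∑ i ∈ Finset.range L, x i * α ((i + (L - s % L)) % L)

open Classical in
/-- Pseudo-periodic assignment of total weight `N` on a cycle of length `L`. -/
noncomputable def atilde (L N : ℕ) (i : ℕ) : ℝ :=
  if ∃ k < N % L, i = Nat.floor ((L : ℝ) / (N % L : ℕ) * k)
  then ((N / L : ℕ) : ℝ) + 1 else ((N / L : ℕ) : ℝ)

open Finset


lemma rb_mod_shift_inj {L : ℕ} (b : ℕ) {t1 t2 : ℕ} (h1 : t1 < L) (h2 : t2 < L)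
    (h : (b + t1) % L = (b + t2) % L) : t1 = t2 := by
  have h' : t1 ≡ t2 [MOD L] := Nat.ModEq.add_left_cancel' b h
  rwa [Nat.ModEq, Nat.mod_eq_of_lt h1, Nat.mod_eq_of_lt h2] at h'

lemma rb_mod_shift_inj' {L : ℕ} (c : ℕ) {t1 t2 : ℕ} (h1 : t1 < L) (h2 : t2 < L)
    (h : (t1 + c) % L = (t2 + c) % L) : t1 = t2 := by
  have h' : t1 ≡ t2 [MOD L] := Nat.ModEq.add_right_cancel' c h
  rwa [Nat.ModEq, Nat.mod_eq_of_lt h1, Nat.mod_eq_of_lt h2] at h'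

lemma rb_sum_shift (L c : ℕ) (f : ℕ → ℝ) :
    ∑ t ∈ Finset.range L, f ((t + c) % L) = ∑ t ∈ Finset.range L, f t := by
  rcases Nat.eq_zero_or_pos L with h | hL
  · simp [h]
  have hinj : ∀ t1 ∈ Finset.range L, ∀ t2 ∈ Finset.range L,
      (t1 + c) % L = (t2 + c) % L → t1 = t2 := by
    intro t1 h1 t2 h2 h
    exact rb_mod_shift_inj' c (mem_range.1 h1) (mem_range.1 h2) h
  have himg : (Finset.range L).image (fun t => (t + c) % L) = Finset.range L := by
    apply Finset.eq_of_subset_of_card_le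
    · intro v hv
      simp only [mem_image, mem_range] at hv ⊢
      obtain ⟨t, _, rfl⟩ := hv
      exact Nat.mod_lt _ hL
    · rw [Finset.card_image_of_injOn (fun a ha b hb h => hinj a ha b hb h)]
  conv_rhs => rw [← himg]
  rw [Finset.sum_image hinj]

lemma rb_ceil_le_iff {L : ℕ} (hL : 0 < L) (a k : ℕ) : (a + L - 1) / L ≤ k ↔ a ≤ L * k := by
  rw [← Nat.lt_succ_iff, Nat.div_lt_iff_lt_mul hL, Nat.succ_eq_add_one, add_mul, one_mul,
    mul_comm L k]
  omega

lemma rb_ceil_lb {L : ℕ} (hL : 0 < L) (a : ℕ) : (a : ℝ) / L ≤ (((a + L - 1) / L : ℕ) : ℝ) := by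
  have h : a ≤ L * ((a + L - 1) / L) := (rb_ceil_le_iff hL a _).1 le_rfl
  have hL0 : (0:ℝ) < (L:ℝ) := by exact_mod_cast hL
  rw [div_le_iff₀ hL0]
  calc (a:ℝ) ≤ ((L * ((a + L - 1) / L) : ℕ) : ℝ) := by exact_mod_cast h
    _ = (((a + L - 1) / L : ℕ) : ℝ) * L := by push_cast; ring

lemma rb_ceil_ub {L : ℕ} (hL : 0 < L) (a : ℕ) :
    (((a + L - 1) / L : ℕ) : ℝ) ≤ (a : ℝ) / L + 1 := by
  have hL0 : (0:ℝ) < (L:ℝ) := by exact_mod_cast hL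
  calc (((a + L - 1) / L : ℕ) : ℝ) ≤ ((a + L - 1 : ℕ) : ℝ) / L := Nat.cast_div_le
    _ = ((a : ℝ) + L - 1) / L := by
        congr 1; push_cast [Nat.cast_sub (by omega : 1 ≤ a + L)]; ring
    _ ≤ (a : ℝ) / L + 1 := by
        rw [div_le_iff₀ hL0, add_mul, one_mul, div_mul_cancel₀ _ hL0.ne']
        linarith

lemma rb_kcount (L r : ℕ) (hL : 0 < L) (hr : 0 < r) (c ℓ : ℕ) (hc : c < L) (hℓ : ℓ ≤ L) :
    ((((Finset.range r).filter fun k => ∃ t < ℓ, L * k / r = (c + t) % L).card : ℕ) : ℝ)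
      ≤ (ℓ : ℝ) * r / L + 1 := by
  classical
  have hL0 : (0:ℝ) < (L:ℝ) := by exact_mod_cast hL
  set F := (Finset.range r).filter fun k => ∃ t < ℓ, L * k / r = (c + t) % L with hF
  have hFr : ∀ k ∈ F, k < r := by
    intro k hk; rw [hF, Finset.mem_filter, Finset.mem_range] at hk; exact hk.1
  have hmem : ∀ k ∈ F, (c * r ≤ L * k ∧ L * k < (c + ℓ) * r) ∨ (L * k + L * r < (c + ℓ) * r) := by
    intro k hk
    rw [hF, Finset.mem_filter, Finset.mem_range] at hk
    obtain ⟨t, ht, hv⟩ := hk.2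
    by_cases hct : c + t < L
    · left
      rw [Nat.mod_eq_of_lt hct] at hv
      have h1 : c ≤ L * k / r := by omega
      have h2 : L * k / r < c + ℓ := by omega
      exact ⟨(Nat.le_div_iff_mul_le hr).1 h1, (Nat.div_lt_iff_lt_mul hr).1 h2⟩
    · right
      have hmod : (c + t) % L = c + t - L := by
        rw [Nat.mod_eq_sub_mod (by omega)]
        exact Nat.mod_eq_of_lt (by omega)
      rw [hmod] at hv
      have h2 : L * k / r < c + ℓ - L := by omega
      have h3 : L * k < (c + ℓ - L) * r := (Nat.div_lt_iff_lt_mul hr).1 h2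
      have h4 : (c + ℓ - L) * r + L * r = (c + ℓ) * r := by
        rw [← add_mul]; congr 1; omega
      omega
  by_cases hcase : c + ℓ ≤ L
  · -- no wrap
    set a1 := (c * r + L - 1) / L with ha1
    set b1 := ((c + ℓ) * r + L - 1) / L with hb1
    have hsub : F ⊆ Finset.Ico a1 b1 := by
      intro k hk
      rcases hmem k hk with h | h
      · rw [Finset.mem_Ico]
        constructor
        · exact (rb_ceil_le_iff hL _ _).2 h.1
        · by_contra hb
          push_neg at hb
          have := (rb_ceil_le_iff hL ((c + ℓ) * r) k).1 hb
          omega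
      · exfalso
        have : (c + ℓ) * r ≤ L * r := Nat.mul_le_mul_right r hcase
        omega
    have hcard : F.card ≤ b1 - a1 := by
      simpa using Finset.card_le_card hsub
    have hlb := rb_ceil_lb hL (c * r)
    have hub := rb_ceil_ub hL ((c + ℓ) * r)
    rcases (by omega : F.card + a1 ≤ b1 ∨ F.card = 0) with h | h
    · have hcast : ((F.card : ℕ) : ℝ) + (a1 : ℝ) ≤ (b1 : ℝ) := by exact_mod_cast h
      have e1 : ((c * r : ℕ) : ℝ) = (c : ℝ) * r := by push_cast; ring
      have e2 : (((c + ℓ) * r : ℕ) : ℝ) = ((c : ℝ) + ℓ) * r := by push_cast; ring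
      rw [e1] at hlb
      rw [e2] at hub
      have key : ((c : ℝ) + ℓ) * r / L = (c : ℝ) * r / L + (ℓ : ℝ) * r / L := by ring
      linarith
    · rw [h]; push_cast; positivity
  · -- wrap
    push_neg at hcase
    set a1 := (c * r + L - 1) / L with ha1
    set b2 := ((c + ℓ - L) * r + L - 1) / L with hb2'
    have h4 : (c + ℓ - L) * r + L * r = (c + ℓ) * r := by
      rw [← add_mul]; congr 1; omega
    have hsub1 : F.filter (fun k => c * r ≤ L * k) ⊆ Finset.Ico a1 r := by
      intro k hk
      rw [Finset.mem_filter] at hk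
      rw [Finset.mem_Ico]
      exact ⟨(rb_ceil_le_iff hL _ _).2 hk.2, hFr k hk.1⟩
    have hsub2 : F.filter (fun k => ¬ c * r ≤ L * k) ⊆ Finset.range b2 := by
      intro k hk
      rw [Finset.mem_filter] at hk
      rcases hmem k hk.1 with h | h
      · exact absurd h.1 hk.2
      · rw [Finset.mem_range]
        have h5 : L * k < (c + ℓ - L) * r := by omega
        by_contra hb
        push_neg at hb
        have := (rb_ceil_le_iff hL ((c + ℓ - L) * r) k).1 hb
        omega
    have hcards : F.card ≤ (Finset.Ico a1 r).card + b2 := by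
      have hsplit := Finset.card_filter_add_card_filter_not
        (s := F) (p := fun k => c * r ≤ L * k)
      have c1 := Finset.card_le_card hsub1
      have c2 := Finset.card_le_card hsub2
      rw [Finset.card_range] at c2
      omega
    have hIco : ((Finset.Ico a1 r).card : ℝ) ≤ (r : ℝ) - (c : ℝ) * r / L := by
      rw [Nat.card_Ico]
      have hlb := rb_ceil_lb hL (c * r)
      have e1 : ((c * r : ℕ) : ℝ) = (c : ℝ) * r := by push_cast; ring
      rw [e1] at hlb
      by_cases h : a1 ≤ r
      · rw [Nat.cast_sub h]; linarith
      · push_neg at h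
        rw [Nat.sub_eq_zero_of_le h.le]
        have : (c : ℝ) * r / L ≤ (r : ℝ) := by
          rw [div_le_iff₀ hL0]
          have : (c : ℝ) ≤ L := by exact_mod_cast hc.le
          nlinarith [Nat.cast_nonneg (α := ℝ) r]
        simpa using this
    have hub := rb_ceil_ub hL ((c + ℓ - L) * r)
    have e2 : (((c + ℓ - L) * r : ℕ) : ℝ) = ((c : ℝ) + ℓ - L) * r := by
      rw [Nat.cast_mul, Nat.cast_sub (by omega : L ≤ c + ℓ)]
      push_cast; ring
    rw [e2] at hub
    have hcast : ((F.card : ℕ) : ℝ) ≤ ((Finset.Ico a1 r).card : ℝ) + (b2 : ℝ) := by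
      exact_mod_cast hcards
    have key : (r : ℝ) - (c : ℝ) * r / L + (((c : ℝ) + ℓ - L) * r / L + 1)
        = (ℓ : ℝ) * r / L + 1 := by
      field_simp
      ring
    linarith

lemma rb_arc_count (L r : ℕ) (hL : 0 < L) (hr : 0 < r) (b ℓ : ℕ) (hℓ : ℓ ≤ L) :
    (((((Finset.range ℓ).image fun t => (b + t) % L).filter
        fun v => ∃ k < r, v = L * k / r).card : ℕ) : ℝ)
      ≤ (ℓ : ℝ) * r / L + 1 := by
  classical
  refine le_trans ?_ (rb_kcount L r hL hr (b % L) ℓ (Nat.mod_lt _ hL) hℓ)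
  have hcard : (((Finset.range ℓ).image fun t => (b + t) % L).filter
        fun v => ∃ k < r, v = L * k / r).card
      ≤ ((Finset.range r).filter fun k => ∃ t < ℓ, L * k / r = (b % L + t) % L).card := by
    apply Finset.card_le_card_of_surjOn (fun k => L * k / r)
    intro v hv
    simp only [coe_filter, Set.mem_setOf_eq, Finset.mem_filter, Finset.mem_image,
      Finset.mem_range, Set.mem_image, Finset.mem_coe] at hv ⊢
    obtain ⟨⟨t, ht, hbt⟩, k, hk, hvk⟩ := hv
    exact ⟨k, ⟨hk, t, ht, by rw [← hvk, ← hbt, Nat.mod_add_mod]⟩, hvk.symm⟩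
  exact_mod_cast hcard

lemma rb_main_count (L r : ℕ) (hL : 0 < L) :
    ∀ n (A : Finset ℕ), A.card ≤ n → (∀ v ∈ A, v < L) →
    (((A.filter fun v => ∃ k < r, v = L * k / r).card : ℕ) : ℝ)
      ≤ (A.card : ℝ) * r / L + ((A.filter fun j => (j + 1) % L ∉ A).card : ℝ) := by
  classical
  intro n
  induction n with
  | zero =>
    intro A hcard _
    have : A = ∅ := Finset.card_eq_zero.1 (by omega)
    simp [this]
  | succ n ih =>
    intro A hcard hAL
    rcases Nat.eq_zero_or_pos r with hr0 | hr
    · simp only [hr0, Nat.not_lt_zero, false_and, exists_false, exists_prop]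
      rw [Finset.filter_false]
      simp only [Finset.card_empty, Nat.cast_zero]
      positivity
    by_cases hD : (A.filter fun j => (j + 1) % L ∉ A) = ∅
    · -- no descents: A empty or full
      rcases Finset.eq_empty_or_nonempty A with hA | ⟨j0, hj0⟩
      · simp [hA]
      have hstep : ∀ a ∈ A, (a + 1) % L ∈ A := by
        intro a ha
        by_contra h
        have : a ∈ A.filter fun j => (j + 1) % L ∉ A := Finset.mem_filter.2 ⟨ha, h⟩
        rw [hD] at this
        exact absurd this (Finset.notMem_empty a)
      have hiter : ∀ t, (j0 + t) % L ∈ A := by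
        intro t
        induction t with
        | zero => simpa [Nat.mod_eq_of_lt (hAL j0 hj0)] using hj0
        | succ t iht =>
          have := hstep _ iht
          rwa [Nat.mod_add_mod] at this
      have hAeq : A = Finset.range L := by
        apply Finset.Subset.antisymm
        · intro v hv; exact Finset.mem_range.2 (hAL v hv)
        · intro v hv
          rw [Finset.mem_range] at hv
          have hj0L : j0 < L := hAL j0 hj0
          have := hiter (v + L - j0)
          rwa [(by omega : j0 + (v + L - j0) = v + L), Nat.add_mod_right,
            Nat.mod_eq_of_lt hv] at this
      have hLHS : ((Finset.range L).filter fun v => ∃ k < r, v = L * k / r).card ≤ r := by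
        calc ((Finset.range L).filter fun v => ∃ k < r, v = L * k / r).card
            ≤ ((Finset.range r).image fun k => L * k / r).card := by
              apply Finset.card_le_card
              intro v hv
              rw [Finset.mem_filter] at hv
              obtain ⟨-, k, hk, rfl⟩ := hv
              exact Finset.mem_image.2 ⟨k, Finset.mem_range.2 hk, rfl⟩
          _ ≤ r := le_trans Finset.card_image_le (by rw [Finset.card_range])
      rw [hAeq] at hD ⊢
      rw [hD]
      have hL0 : (0:ℝ) < (L:ℝ) := by exact_mod_cast hL
      calc ((((Finset.range L).filter fun v => ∃ k < r, v = L * k / r).card : ℕ) : ℝ)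
          ≤ (r : ℝ) := by exact_mod_cast hLHS
        _ = ((Finset.range L).card : ℝ) * r / L + ((∅ : Finset ℕ).card : ℝ) := by
            rw [Finset.card_range, Finset.card_empty]
            field_simp
            simp
      -- done
    · -- there is a descent j
      obtain ⟨j, hjmem⟩ := Finset.nonempty_iff_ne_empty.2 hD
      have hjA : j ∈ A := (Finset.mem_filter.1 hjmem).1
      have hjd : (j + 1) % L ∉ A := (Finset.mem_filter.1 hjmem).2
      have hjL : j < L := hAL j hjA
      have hL1 : 1 < L := by
        by_contra h
        have hLeq : L = 1 := by omega
        have : j = 0 := by omega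
        rw [this, hLeq] at hjd
        rw [this] at hjA
        exact hjd (by simpa using hjA)
      have hex : ∃ t, 0 < t ∧ (j + (L - t)) % L ∉ A := by
        by_contra h
        push_neg at h
        have := h (L - 1) (by omega)
        rw [(by omega : L - (L - 1) = 1)] at this
        exact hjd this
      set ℓ := Nat.find hex with hℓdef
      have hℓpos : 0 < ℓ := (Nat.find_spec hex).1
      have hnotin : (j + (L - ℓ)) % L ∉ A := (Nat.find_spec hex).2
      have hℓlt : ℓ < L := by
        have : ℓ ≤ L - 1 := Nat.find_min' hex ⟨by omega, by
          rw [(by omega : L - (L - 1) = 1)]; exact hjd⟩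
        omega
      have hin : ∀ s, s < ℓ → (j + (L - s)) % L ∈ A := by
        intro s hs
        rcases Nat.eq_zero_or_pos s with h0 | h0
        · rw [h0]
          simpa [Nat.sub_zero, Nat.add_mod_right, Nat.mod_eq_of_lt hjL] using hjA
        · by_contra h
          exact (Nat.find_min hex hs) ⟨h0, h⟩
      set b := (j + (L - (ℓ - 1))) % L with hbdef
      have hbt : ∀ t, t ≤ ℓ - 1 → (b + t) % L = (j + (L - (ℓ - 1 - t))) % L := by
        intro t ht
        rw [hbdef, Nat.mod_add_mod]
        congr 1
        omega
      set comp := (Finset.range ℓ).image (fun t => (b + t) % L) with hcompdef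
      have hcompA : comp ⊆ A := by
        intro v hv
        rw [hcompdef, Finset.mem_image] at hv
        obtain ⟨t, ht, rfl⟩ := hv
        rw [Finset.mem_range] at ht
        rw [hbt t (by omega)]
        exact hin (ℓ - 1 - t) (by omega)
      have hcompcard : comp.card = ℓ := by
        rw [hcompdef, Finset.card_image_of_injOn, Finset.card_range]
        intro t1 h1 t2 h2 h
        simp only [Finset.coe_range, Set.mem_Iio] at h1 h2
        exact rb_mod_shift_inj b (by omega) (by omega) h
      have hjcomp : j ∈ comp := by
        rw [hcompdef, Finset.mem_image]
        refine ⟨ℓ - 1, Finset.mem_range.2 (by omega), ?_⟩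
        rw [hbt (ℓ - 1) le_rfl, (by omega : ℓ - 1 - (ℓ - 1) = 0), Nat.sub_zero,
          Nat.add_mod_right, Nat.mod_eq_of_lt hjL]
      set A' := A \ comp with hA'def
      have hℓA : ℓ ≤ A.card := hcompcard ▸ Finset.card_le_card hcompA
      have hA'card : A'.card = A.card - ℓ := by
        rw [hA'def, Finset.card_sdiff_of_subset hcompA, hcompcard]
      have hA'le : A'.card ≤ n := by omega
      -- descents of A' inject into descents of A minus j
      have hdesc : (A'.filter fun v => (v + 1) % L ∉ A')
          ⊆ (A.filter fun v => (v + 1) % L ∉ A).erase j := by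
        intro v hv
        rw [Finset.mem_filter] at hv
        obtain ⟨hvA', hvd⟩ := hv
        rw [hA'def, Finset.mem_sdiff] at hvA'
        obtain ⟨hvA, hvnc⟩ := hvA'
        have hvL : v < L := hAL v hvA
        have hvne : v ≠ j := fun h => hvnc (h ▸ hjcomp)
        rw [Finset.mem_erase, Finset.mem_filter]
        refine ⟨hvne, hvA, ?_⟩
        by_contra hc
        have hcin : (v + 1) % L ∈ comp := by
          by_contra h2
          exact hvd (by rw [hA'def, Finset.mem_sdiff]; exact ⟨hc, h2⟩)
        rw [hcompdef, Finset.mem_image] at hcin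
        obtain ⟨t, ht, hteq⟩ := hcin
        rw [Finset.mem_range] at ht
        set s := ℓ - 1 - t with hs
        have hsℓ : s + 1 ≤ ℓ := by omega
        have h1 : (v + 1) % L = (j + (L - s)) % L := by
          rw [← hteq, hbt t (by omega)]
        have h2 : ((j + (L - (s + 1))) % L + 1) % L = (j + (L - s)) % L := by
          rw [Nat.mod_add_mod]
          congr 1
          omega
        have hw : v = (j + (L - (s + 1))) % L := by
          have h3 : (1 + v) % L = (1 + (j + (L - (s + 1))) % L) % L := by
            rw [add_comm 1 v, add_comm 1 ((j + (L - (s + 1))) % L), h1, h2]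
          exact rb_mod_shift_inj 1 hvL (Nat.mod_lt _ (by omega)) h3
        rcases (by omega : s + 1 < ℓ ∨ s + 1 = ℓ) with hlt | heq
        · apply hvnc
          rw [hcompdef, Finset.mem_image]
          refine ⟨ℓ - 1 - (s + 1), Finset.mem_range.2 (by omega), ?_⟩
          rw [hbt (ℓ - 1 - (s + 1)) (by omega), (by omega : ℓ - 1 - (ℓ - 1 - (s + 1)) = s + 1)]
          exact hw.symm
        · apply hnotin
          rw [← heq]
          exact hw ▸ hvA
      have hjdesc : j ∈ A.filter fun v => (v + 1) % L ∉ A := hjmem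
      have hdcard : (A'.filter fun v => (v + 1) % L ∉ A').card
          ≤ (A.filter fun v => (v + 1) % L ∉ A).card - 1 := by
        calc (A'.filter fun v => (v + 1) % L ∉ A').card
            ≤ ((A.filter fun v => (v + 1) % L ∉ A).erase j).card := Finset.card_le_card hdesc
          _ = (A.filter fun v => (v + 1) % L ∉ A).card - 1 :=
              Finset.card_erase_of_mem hjdesc
      have hDpos : 1 ≤ (A.filter fun v => (v + 1) % L ∉ A).card :=
        Finset.card_pos.2 ⟨j, hjmem⟩
      -- split the count
      have hsplitset : A = A' ∪ comp := by
        rw [hA'def, Finset.sdiff_union_of_subset hcompA]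
      have hsplit : (A.filter fun v => ∃ k < r, v = L * k / r).card
          ≤ (A'.filter fun v => ∃ k < r, v = L * k / r).card
            + (comp.filter fun v => ∃ k < r, v = L * k / r).card := by
        calc (A.filter fun v => ∃ k < r, v = L * k / r).card
            = ((A' ∪ comp).filter fun v => ∃ k < r, v = L * k / r).card := by rw [← hsplitset]
          _ = ((A'.filter fun v => ∃ k < r, v = L * k / r)
              ∪ (comp.filter fun v => ∃ k < r, v = L * k / r)).card := by
              rw [Finset.filter_union]
          _ ≤ _ := Finset.card_union_le _ _
      have hIH := ih A' hA'le (fun v hv => hAL v (Finset.mem_sdiff.1 hv).1)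
      have harc := rb_arc_count L r hL hr b ℓ hℓlt.le
      rw [← hcompdef] at harc
      -- cast and combine
      have hcast1 : (A.card : ℝ) = (A'.card : ℝ) + (ℓ : ℝ) := by
        rw [hA'card, Nat.cast_sub hℓA]
        ring
      have hcast2 : ((A'.filter fun v => (v + 1) % L ∉ A').card : ℝ)
          ≤ ((A.filter fun v => (v + 1) % L ∉ A).card : ℝ) - 1 := by
        have h5 : (A'.filter fun v => (v + 1) % L ∉ A').card + 1
            ≤ (A.filter fun v => (v + 1) % L ∉ A).card := by omega
        have h6 : ((A'.filter fun v => (v + 1) % L ∉ A').card : ℝ) + 1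
            ≤ ((A.filter fun v => (v + 1) % L ∉ A).card : ℝ) := by exact_mod_cast h5
        linarith
      have hsplitR : ((A.filter fun v => ∃ k < r, v = L * k / r).card : ℝ)
          ≤ ((A'.filter fun v => ∃ k < r, v = L * k / r).card : ℝ)
            + ((comp.filter fun v => ∃ k < r, v = L * k / r).card : ℝ) := by
        exact_mod_cast hsplit
      have hring : (A'.card : ℝ) * r / L + (ℓ : ℝ) * r / L = (A.card : ℝ) * r / L := by
        rw [hcast1]; ring
      linarith

lemma rb_xcount_le (L : ℕ) (hL : 0 < L) (x α : ℕ → ℝ) (hx0 : ∀ i, 0 ≤ x i)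
    (hα : ∀ i, 0 ≤ α i) (s : ℕ) :
    xcount L x α s ≤ ∑ i ∈ Finset.range L, x i * ∑ t ∈ Finset.range L, α t := by
  unfold xcount
  apply Finset.sum_le_sum
  intro i _
  apply mul_le_mul_of_nonneg_left ?_ (hx0 i)
  exact Finset.single_le_sum (fun t _ => hα t) (Finset.mem_range.2 (Nat.mod_lt _ hL))

lemma rb_bddAbove (L : ℕ) (hL : 0 < L) (x α : ℕ → ℝ) (hx0 : ∀ i, 0 ≤ x i)
    (hα : ∀ i, 0 ≤ α i) : BddAbove (Set.range fun s => xcount L x α s) := by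
  refine ⟨∑ i ∈ Finset.range L, x i * ∑ t ∈ Finset.range L, α t, ?_⟩
  rintro _ ⟨s, rfl⟩
  exact rb_xcount_le L hL x α hx0 hα s

lemma rb_avg_le_sup (L : ℕ) (hL : 0 < L) (x α : ℕ → ℝ) (hx0 : ∀ i, 0 ≤ x i)
    (hα : ∀ i, 0 ≤ α i) :
    (∑ i ∈ Finset.range L, x i) * (∑ t ∈ Finset.range L, α t) / L
      ≤ ⨆ s : ℕ, xcount L x α s := by
  have hL0 : (0:ℝ) < (L:ℝ) := by exact_mod_cast hL
  have htot : ∑ s ∈ Finset.range L, xcount L x α s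
      = (∑ i ∈ Finset.range L, x i) * (∑ t ∈ Finset.range L, α t) := by
    unfold xcount
    rw [Finset.sum_comm]
    calc ∑ i ∈ Finset.range L, ∑ s ∈ Finset.range L, x i * α ((i + (L - s % L)) % L)
        = ∑ i ∈ Finset.range L, x i * ∑ s ∈ Finset.range L, α ((i + (L - s % L)) % L) := by
          exact Finset.sum_congr rfl fun i _ => (Finset.mul_sum _ _ _).symm
      _ = ∑ i ∈ Finset.range L, x i * ∑ t ∈ Finset.range L, α t := by
          refine Finset.sum_congr rfl fun i _ => ?_
          congr 1
          calc ∑ s ∈ Finset.range L, α ((i + (L - s % L)) % L)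
              = ∑ s ∈ Finset.range L, α ((s + (i + 1)) % L) := by
                rw [← Finset.sum_range_reflect]
                refine Finset.sum_congr rfl fun s hs => ?_
                rw [Finset.mem_range] at hs
                congr 1
                rw [Nat.mod_eq_of_lt (by omega : L - 1 - s < L)]
                congr 1
                omega
            _ = ∑ t ∈ Finset.range L, α t := rb_sum_shift L (i + 1) α
      _ = (∑ i ∈ Finset.range L, x i) * (∑ t ∈ Finset.range L, α t) := by
          rw [← Finset.sum_mul]
  have hne : (Finset.range L).Nonempty := Finset.nonempty_range_iff.2 hL.ne'
  obtain ⟨s0, _, hs0⟩ := Finset.exists_le_of_sum_le (f := fun _ =>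
      (∑ i ∈ Finset.range L, x i) * (∑ t ∈ Finset.range L, α t) / L)
      (g := fun s => xcount L x α s) hne (by
        rw [htot, Finset.sum_const, Finset.card_range, nsmul_eq_mul]
        field_simp
        exact le_rfl)
  exact le_trans hs0 (le_ciSup (rb_bddAbove L hL x α hx0 hα) s0)

lemma rb_percycle (L : ℕ) (hL : 0 < L) (x : ℕ → ℝ) (hx : ∀ i, x i = 0 ∨ x i = 1)
    (α : ℕ → ℝ) (hα : ∀ i, 0 ≤ α i) (p : ℕ) (start len : ℕ → ℕ)
    (hsupp : ∀ i < L, (x i = 1 ↔ ∃ k < p, ∃ t < len k, i = (start k + t) % L))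
    (N : ℕ) (hNle : (N : ℝ) ≤ (∑ i ∈ Finset.range L, α i) + 1) :
    (⨆ s : ℕ, xcount L x (atilde L N) s) ≤ (⨆ s : ℕ, xcount L x α s) + 1 + p := by
  classical
  have hL0 : (0:ℝ) < (L:ℝ) := by exact_mod_cast hL
  have hx0 : ∀ i, 0 ≤ x i := fun i => by rcases hx i with h | h <;> rw [h] <;> norm_num
  set r := N % L with hrdef
  set q := N / L with hqdef
  set A := (Finset.range L).filter (fun i => x i = 1) with hAdef
  set m := A.card with hmdef
  set W := ∑ i ∈ Finset.range L, α i with hWdef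
  have hAL : ∀ v ∈ A, v < L := fun v hv => Finset.mem_range.1 (Finset.mem_filter.1 hv).1
  have hmL : m ≤ L := by
    rw [hmdef, hAdef]
    calc ((Finset.range L).filter (fun i => x i = 1)).card
        ≤ (Finset.range L).card := Finset.card_filter_le _ _
      _ = L := Finset.card_range L
  -- sum of x equals m
  have hxsum : ∑ i ∈ Finset.range L, x i = (m : ℝ) := by
    rw [← Finset.sum_filter_add_sum_filter_not (Finset.range L) (fun i => x i = 1)]
    have h1 : ∑ i ∈ (Finset.range L).filter (fun i => x i = 1), x i = (m : ℝ) := by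
      rw [hmdef, hAdef]
      rw [Finset.sum_congr rfl (fun i hi => (Finset.mem_filter.1 hi).2), Finset.sum_const,
        nsmul_eq_mul, mul_one]
    have h2 : ∑ i ∈ (Finset.range L).filter (fun i => ¬ x i = 1), x i = 0 := by
      apply Finset.sum_eq_zero
      intro i hi
      rcases hx i with h | h
      · exact h
      · exact absurd h (Finset.mem_filter.1 hi).2
    rw [h1, h2, add_zero]
  -- atilde evaluation
  have hfloor : ∀ k : ℕ, Nat.floor ((L : ℝ) / (r : ℕ) * k) = L * k / r := by
    intro k
    rcases Nat.eq_zero_or_pos r with h | h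
    · simp [h]
    · rw [div_mul_eq_mul_div, (by push_cast; ring : (L : ℝ) * k = ((L * k : ℕ) : ℝ)),
        Nat.floor_div_natCast, Nat.floor_natCast]
  have hat1 : ∀ v, (∃ k < r, v = L * k / r) → atilde L N v = (q : ℝ) + 1 := by
    intro v hv
    unfold atilde
    rw [if_pos]
    obtain ⟨k, hk, hvk⟩ := hv
    exact ⟨k, hk, by rw [hfloor]; exact hvk⟩
  have hat2 : ∀ v, ¬ (∃ k < r, v = L * k / r) → atilde L N v = (q : ℝ) := by
    intro v hv
    unfold atilde
    rw [if_neg]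
    rintro ⟨k, hk, hvk⟩
    exact hv ⟨k, hk, by rw [← hfloor]; exact hvk⟩
  -- xcount of atilde
  have hxc : ∀ s : ℕ, xcount L x (atilde L N) s
      = (q : ℝ) * m + ((A.filter fun i => ∃ k < r, (i + (L - s % L)) % L = L * k / r).card : ℝ) := by
    intro s
    unfold xcount
    rw [← Finset.sum_filter_add_sum_filter_not (Finset.range L) (fun i => x i = 1)]
    have h2 : ∑ i ∈ (Finset.range L).filter (fun i => ¬ x i = 1),
        x i * atilde L N ((i + (L - s % L)) % L) = 0 := by
      apply Finset.sum_eq_zero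
      intro i hi
      rcases hx i with h | h
      · rw [h, zero_mul]
      · exact absurd h (Finset.mem_filter.1 hi).2
    rw [h2, add_zero, ← hAdef]
    have h1 : ∑ i ∈ A, x i * atilde L N ((i + (L - s % L)) % L)
        = ∑ i ∈ A, atilde L N ((i + (L - s % L)) % L) := by
      refine Finset.sum_congr rfl fun i hi => ?_
      rw [(Finset.mem_filter.1 hi).2, one_mul]
    rw [h1]
    rw [← Finset.sum_filter_add_sum_filter_not A
      (fun i => ∃ k < r, (i + (L - s % L)) % L = L * k / r)]
    have h3 : ∑ i ∈ A.filter (fun i => ∃ k < r, (i + (L - s % L)) % L = L * k / r),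
        atilde L N ((i + (L - s % L)) % L)
        = ((A.filter fun i => ∃ k < r, (i + (L - s % L)) % L = L * k / r).card : ℝ) * ((q : ℝ) + 1) := by
      rw [Finset.sum_congr rfl (fun i hi => hat1 _ (Finset.mem_filter.1 hi).2),
        Finset.sum_const, nsmul_eq_mul]
    have h4 : ∑ i ∈ A.filter (fun i => ¬ ∃ k < r, (i + (L - s % L)) % L = L * k / r),
        atilde L N ((i + (L - s % L)) % L)
        = ((A.filter fun i => ¬ ∃ k < r, (i + (L - s % L)) % L = L * k / r).card : ℝ) * (q : ℝ) := by
      rw [Finset.sum_congr rfl (fun i hi => hat2 _ (Finset.mem_filter.1 hi).2),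
        Finset.sum_const, nsmul_eq_mul]
    rw [h3, h4]
    have h5 : (A.filter fun i => ∃ k < r, (i + (L - s % L)) % L = L * k / r).card
        + (A.filter fun i => ¬ ∃ k < r, (i + (L - s % L)) % L = L * k / r).card = m := by
      rw [hmdef]
      exact Finset.card_filter_add_card_filter_not _
    have h6 : ((A.filter fun i => ¬ ∃ k < r, (i + (L - s % L)) % L = L * k / r).card : ℝ)
        = (m : ℝ) - ((A.filter fun i => ∃ k < r, (i + (L - s % L)) % L = L * k / r).card : ℝ) := by
      have := h5
      push_cast [← this]
      ring
    rw [h6]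
    ring
  -- count bound
  have hcnt : ∀ s : ℕ, ((A.filter fun i => ∃ k < r, (i + (L - s % L)) % L = L * k / r).card : ℝ)
      ≤ (m : ℝ) * r / L + p := by
    intro s
    set c := L - s % L with hcdef
    set A'' := A.image (fun i => (i + c) % L) with hA''def
    have hinj : ∀ i1 ∈ A, ∀ i2 ∈ A, (i1 + c) % L = (i2 + c) % L → i1 = i2 := by
      intro i1 h1 i2 h2 h
      exact rb_mod_shift_inj' c (hAL i1 h1) (hAL i2 h2) h
    have hA''L : ∀ v ∈ A'', v < L := by
      intro v hv
      rw [hA''def, Finset.mem_image] at hv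
      obtain ⟨i, _, rfl⟩ := hv
      exact Nat.mod_lt _ hL
    have hcardA'' : A''.card = m := by
      rw [hA''def, Finset.card_image_of_injOn (fun a ha b hb h => hinj a ha b hb h), hmdef]
    have hfilt : (A.filter fun i => ∃ k < r, (i + c) % L = L * k / r).card
        = (A''.filter fun v => ∃ k < r, v = L * k / r).card := by
      rw [hA''def, Finset.filter_image]
      rw [Finset.card_image_of_injOn]
      intro a ha b hb h
      exact hinj a (Finset.mem_of_mem_filter a ha) b (Finset.mem_of_mem_filter b hb) h
    -- descents of A'' bounded by p
    have hQ : ∀ v ∈ A''.filter (fun v => (v + 1) % L ∉ A''),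
        ∃ k, k < p ∧ v = (start k + (len k - 1) + c) % L := by
      intro v hv
      rw [Finset.mem_filter] at hv
      obtain ⟨hvA'', hvd⟩ := hv
      rw [hA''def, Finset.mem_image] at hvA''
      obtain ⟨i, hiA, hiv⟩ := hvA''
      have hiL : i < L := hAL i hiA
      have hxi : x i = 1 := (Finset.mem_filter.1 hiA).2
      obtain ⟨k, hk, t, ht, hit⟩ := (hsupp i hiL).1 hxi
      refine ⟨k, hk, ?_⟩
      by_cases htlen : t + 1 < len k
      · exfalso
        apply hvd
        rw [hA''def, Finset.mem_image]
        refine ⟨(start k + (t + 1)) % L, ?_, ?_⟩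
        · rw [hAdef, Finset.mem_filter, Finset.mem_range]
          exact ⟨Nat.mod_lt _ hL,
            (hsupp _ (Nat.mod_lt _ hL)).2 ⟨k, hk, t + 1, htlen, rfl⟩⟩
        · rw [Nat.mod_add_mod, ← hiv, Nat.mod_add_mod, hit, add_assoc ((start k + t) % L) c 1,
            Nat.mod_add_mod]
          congr 1
          ring
      · have htk : t = len k - 1 := by omega
        rw [← hiv, hit, Nat.mod_add_mod, htk]
    have hdesc : (A''.filter fun v => (v + 1) % L ∉ A'').card ≤ p := by
      have hmapsto : ∀ v ∈ A''.filter (fun v => (v + 1) % L ∉ A''),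
          (if h : ∃ k, k < p ∧ v = (start k + (len k - 1) + c) % L then h.choose else 0)
            ∈ Finset.range p := by
        intro v hv
        obtain ⟨k, hk, hvk⟩ := hQ v hv
        have hex : ∃ k, k < p ∧ v = (start k + (len k - 1) + c) % L := ⟨k, hk, hvk⟩
        simp only [dif_pos hex]
        exact Finset.mem_range.2 hex.choose_spec.1
      have hinjf : Set.InjOn
          (fun v => if h : ∃ k, k < p ∧ v = (start k + (len k - 1) + c) % L then h.choose else 0)
          ↑(A''.filter (fun v => (v + 1) % L ∉ A'')) := by
        intro v1 h1 v2 h2 heq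
        rw [Finset.mem_coe] at h1 h2
        obtain ⟨k1, hk1, hv1⟩ := hQ v1 h1
        obtain ⟨k2, hk2, hv2⟩ := hQ v2 h2
        have hex1 : ∃ k, k < p ∧ v1 = (start k + (len k - 1) + c) % L := ⟨k1, hk1, hv1⟩
        have hex2 : ∃ k, k < p ∧ v2 = (start k + (len k - 1) + c) % L := ⟨k2, hk2, hv2⟩
        simp only [dif_pos hex1, dif_pos hex2] at heq
        rw [hex1.choose_spec.2, hex2.choose_spec.2, heq]
      have := Finset.card_le_card_of_injOn _ hmapsto hinjf
      rwa [Finset.card_range] at this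
    have hmain := rb_main_count L r hL A''.card A'' le_rfl hA''L
    rw [hcardA''] at hmain
    have hdesc' : ((A''.filter fun v => (v + 1) % L ∉ A'').card : ℝ) ≤ (p : ℝ) := by
      exact_mod_cast hdesc
    have hfilt' : ((A.filter fun i => ∃ k < r, (i + c) % L = L * k / r).card : ℝ)
        = ((A''.filter fun v => ∃ k < r, v = L * k / r).card : ℝ) := by exact_mod_cast hfilt
    rw [hfilt']
    linarith
  -- assemble
  have hsupα := rb_avg_le_sup L hL x α hx0 hα
  rw [hxsum, ← hWdef] at hsupα
  have hNsplit : (q : ℝ) * L + r = (N : ℝ) := by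
    have h := Nat.div_add_mod N L
    have h' : ((L * (N / L) + N % L : ℕ) : ℝ) = (N : ℝ) := by exact_mod_cast congrArg (fun n : ℕ => (n : ℝ)) h
    push_cast at h'
    rw [← hqdef, ← hrdef] at h'
    linarith
  have hsupat : (⨆ s : ℕ, xcount L x (atilde L N) s) ≤ (q : ℝ) * m + ((m : ℝ) * r / L + p) := by
    apply ciSup_le
    intro s
    rw [hxc s]
    have := hcnt s
    linarith
  have h1 : (q : ℝ) * m + (m : ℝ) * r / L = (m : ℝ) * N / L := by
    rw [← hNsplit]
    field_simp
  have h2 : (m : ℝ) * N / L ≤ (m : ℝ) * W / L + (m : ℝ) / L := by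
    rw [← add_div]
    gcongr
    nlinarith [Nat.cast_nonneg (α := ℝ) m]
  have h3 : (m : ℝ) / L ≤ 1 := by
    rw [div_le_one hL0]
    exact_mod_cast hmL
  linarith

theorem rounding_bounds (J : Type*) [Fintype J]
    (L : J → ℕ) (hL : ∀ j, 0 < L j)
    (x : J → ℕ → ℝ) (hx : ∀ j i, x j i = 0 ∨ x j i = 1)
    (α : J → ℕ → ℝ) (hα : ∀ j i, 0 ≤ α j i)
    (p : J → ℕ) (start len : J → ℕ → ℕ)
    (hsupp : ∀ j, ∀ i < L j,
      (x j i = 1 ↔ ∃ k < p j, ∃ t < len j k, i = (start j k + t) % L j))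
    (R : ℝ)
    (hcount : ∑ j, (⨆ s : ℕ, xcount (L j) (x j) (α j) s) ≤ R)
    (N : J → ℕ)
    (hN : (∑ j, (N j : ℝ)) = ∑ j, ∑ i ∈ Finset.range (L j), α j i)
    (hNclose : ∀ j, |(N j : ℝ) - ∑ i ∈ Finset.range (L j), α j i| ≤ 1) :
    ∑ j, (⨆ s : ℕ, xcount (L j) (x j) (atilde (L j) (N j)) s)
      ≤ R + (Fintype.card J : ℝ) + ∑ j, (p j : ℝ) := by
  have key : ∀ j, (⨆ s : ℕ, xcount (L j) (x j) (atilde (L j) (N j)) s)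
      ≤ (⨆ s : ℕ, xcount (L j) (x j) (α j) s) + 1 + p j := by
    intro j
    apply rb_percycle (L j) (hL j) (x j) (hx j) (α j) (hα j) (p j) (start j) (len j)
      (hsupp j) (N j)
    have := (abs_le.1 (hNclose j)).2
    linarith
  calc ∑ j, (⨆ s : ℕ, xcount (L j) (x j) (atilde (L j) (N j)) s)
      ≤ ∑ j, ((⨆ s : ℕ, xcount (L j) (x j) (α j) s) + 1 + p j) :=
        Finset.sum_le_sum fun j _ => key j
    _ = (∑ j, (⨆ s : ℕ, xcount (L j) (x j) (α j) s)) + (Fintype.card J : ℝ)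
        + ∑ j, (p j : ℝ) := by
        rw [Finset.sum_add_distrib, Finset.sum_add_distrib, Finset.sum_const,
          Finset.card_univ, nsmul_eq_mul, mul_one]
    _ ≤ R + (Fintype.card J : ℝ) + ∑ j, (p j : ℝ) := by linarith
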